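/- arXiv:1904.06745 — 2 statements merged into one kernel-verified Lean document; each statement's English description precedes it below -/
import Mathlib

section
/- Fix a constant C1 ≥ 1. There exists N such that for all n ≥ N the following holds: let θ be the smallest integer greater than n/2 such that Pr_{x uniform on {0,1}^n}[L(x) > θ] ≤ 1/n^{C1}, and let f0 : {0,1}^n → {0,1} be defined by f0(x) = 1 if and only if L(x) > θ. Then 1/(6·n^{C1}) ≤ I[f0] ≤ 2n/n^{C1}. -/
open Finset

/-- Level (Hamming weight) of a point of the Boolean cube. -/
def level {n : ℕ} (x : Fin n → Bool) : ℕ :=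
  (Finset.univ.filter (fun i => x i = true)).card

/-- Probability, under the noise distribution `T_δ`, of obtaining the pair `(x, z)`:
`x` is uniform on `{0,1}^n` and each coordinate of `z` independently equals the
corresponding coordinate of `x` with probability `1 − δ` and is flipped with
probability `δ`. -/
noncomputable def noisePairProb (n : ℕ) (δ : ℝ) (x z : Fin n → Bool) : ℝ :=
  (1 / 2 ^ n) * ∏ i : Fin n, (if z i = x i then 1 - δ else δ)

/-- Noise sensitivity: `NS_δ[f] = Pr_{(x,z)∼T_δ}[f(x) ≠ f(z)]`. -/
noncomputable def NS (n : ℕ) (δ : ℝ) (f : (Fin n → Bool) → Bool) : ℝ :=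
  ∑ x : Fin n → Bool, ∑ z : Fin n → Bool,
    noisePairProb n δ x z * (if f x ≠ f z then 1 else 0)

/-- Influence: `I[f] = n · Pr_{x, i}[f(x) ≠ f(x^{⊕i})]`. -/
noncomputable def influence (n : ℕ) (f : (Fin n → Bool) → Bool) : ℝ :=
  (1 / 2 ^ n) * ∑ x : Fin n → Bool, ∑ i : Fin n,
    (if f x ≠ f (Function.update x i (!(x i))) then (1 : ℝ) else 0)

/-- Bias: `B[f] = Pr_{x uniform}[f(x) = 1]`. -/
noncomputable def bias (n : ℕ) (f : (Fin n → Bool) → Bool) : ℝ :=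
  (1 / 2 ^ n) * ∑ x : Fin n → Bool, (if f x = true then (1 : ℝ) else 0)

/-- `tailProb n θ = Pr_{x uniform on {0,1}^n}[L(x) > θ]`. -/
noncomputable def tailProb (n θ : ℕ) : ℝ :=
  (1 / 2 ^ n) * ∑ x : Fin n → Bool, (if θ < level x then (1 : ℝ) else 0)

/-- `isMinimalThreshold C1 n θ` says that `θ` is the smallest integer greater than
`n/2` such that `Pr[L(x) > θ] ≤ 1/n^{C1}`. -/
def isMinimalThreshold (C1 : ℝ) (n θ : ℕ) : Prop :=
  (n : ℝ) / 2 < (θ : ℝ) ∧ tailProb n θ ≤ 1 / (n : ℝ) ^ C1 ∧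
    ∀ θ' : ℕ, (n : ℝ) / 2 < (θ' : ℝ) → tailProb n θ' ≤ 1 / (n : ℝ) ^ C1 → θ ≤ θ'

lemma level_le {n : ℕ} (x : Fin n → Bool) : level x ≤ n := by
  simpa [level] using (card_filter_le univ (fun i => x i = true)).trans_eq (by simp)
lemma card_level (n k : ℕ) :
    (univ.filter fun x : Fin n → Bool => level x = k).card = n.choose k := by
  classical
  have main : (univ.filter fun x : Fin n → Bool => level x = k).card
      = (powersetCard k (univ : Finset (Fin n))).card := by
    refine card_bij' (fun x _ => univ.filter fun j => x j = true)
      (fun s _ => fun j => decide (j ∈ s)) ?_ ?_ ?_ ?_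
    · intro x hx
      simp only [mem_filter, mem_univ, true_and] at hx
      simp [mem_powersetCard, ← hx, level]
    · intro s hs
      simp only [mem_filter, mem_univ, true_and, level]
      rw [mem_powersetCard] at hs
      rw [← hs.2]
      refine Finset.mem_filter.2 ⟨Finset.mem_univ _, ?_⟩
      congr 1
      ext j; simp
    · intro x _; funext j; simp
    · intro s _; ext j; simp
  rw [main, card_powersetCard, card_univ, Fintype.card_fin]
lemma level_update {n : ℕ} (x : Fin n → Bool) (i : Fin n) :
    level (Function.update x i (!(x i))) =
      if x i = true then level x - 1 else level x + 1 := by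
  classical
  unfold level
  by_cases h : x i = true
  · rw [if_pos h]
    have he : (univ.filter fun j => Function.update x i (!(x i)) j = true)
        = (univ.filter fun j => x j = true).erase i := by
      ext j
      rcases eq_or_ne j i with rfl | hj
      · simp [h]
      · simp [Function.update_of_ne hj, hj]
    rw [he, card_erase_of_mem (by simp [h])]
  · rw [if_neg h]
    have he : (univ.filter fun j => Function.update x i (!(x i)) j = true)
        = insert i (univ.filter fun j => x j = true) := by
      ext j
      rcases eq_or_ne j i with rfl | hj
      · simp [h]
      · simp [Function.update_of_ne hj, hj]
    rw [he, card_insert_of_notMem (by simp [h])]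
lemma sum_level (n : ℕ) (g : ℕ → ℝ) :
    ∑ x : Fin n → Bool, g (level x) = ∑ k ∈ range (n+1), (n.choose k : ℝ) * g k := by
  classical
  rw [← Finset.sum_fiberwise_of_maps_to
      (g := fun x : Fin n → Bool => level x) (t := range (n+1))
      (fun x _ => mem_range.2 (Nat.lt_succ_of_le (level_le x))) (fun x => g (level x))]
  refine Finset.sum_congr rfl fun k _ => ?_
  rw [Finset.sum_congr rfl (fun x hx => by rw [(mem_filter.1 hx).2]),
    sum_const, nsmul_eq_mul, card_level]
lemma tailProb_eq (n t : ℕ) :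
    tailProb n t = (∑ k ∈ Ioc t n, (n.choose k : ℝ)) / 2 ^ n := by
  unfold tailProb
  rw [sum_level n (fun k => if t < k then (1:ℝ) else 0)]
  rw [Finset.sum_congr rfl (fun k _ => (mul_ite _ _ _ _).trans (by rw [mul_one, mul_zero]))]
  rw [← Finset.sum_filter]
  have : (range (n+1)).filter (fun k => t < k) = Ioc t n := by
    ext j; simp [mem_Ioc, mem_range]; omega
  rw [this, one_div, inv_mul_eq_div]
lemma choose_anti (n : ℕ) {a b : ℕ} (hn : n ≤ 2 * a) (hab : a ≤ b) :
    n.choose b ≤ n.choose a := by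
  induction b with
  | zero => obtain rfl : a = 0 := Nat.le_zero.mp hab; exact le_refl _
  | succ b ih =>
    rcases Nat.eq_or_lt_of_le hab with rfl | h
    · exact le_refl _
    · have hab' : a ≤ b := Nat.lt_succ_iff.mp h
      refine le_trans ?_ (ih hab')
      have key := Nat.choose_succ_right_eq n b
      have h1 : n.choose (b+1) * (b+1) ≤ n.choose b * (b+1) := by
        rw [key]; exact Nat.mul_le_mul_left _ (by omega)
      exact Nat.le_of_mul_le_mul_right h1 (Nat.succ_pos b)
lemma influence_threshold (n t : ℕ) :
    influence n (fun x => decide (t < level x)) =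
      ((2 * (n - t) * n.choose t : ℕ) : ℝ) / 2 ^ n := by
  classical
  unfold influence
  have hx : ∀ x : Fin n → Bool,
      (∑ i : Fin n, (if (decide (t < level x) ≠ decide (t < level (Function.update x i (!(x i))))) then (1:ℝ) else 0))
      = (fun k => (if k = t + 1 then (k:ℝ) else 0) + (if k = t then ((n - k : ℕ) : ℝ) else 0)) (level x) := by
    intro x
    have step : ∀ i : Fin n,
        (if (decide (t < level x) ≠ decide (t < level (Function.update x i (!(x i))))) then (1:ℝ) else 0)
        = if x i = true then (if level x = t+1 then (1:ℝ) else 0) else (if level x = t then (1:ℝ) else 0) := by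
      intro i
      rw [level_update]
      by_cases h : x i = true
      · rw [if_pos h, if_pos h]
        have hL : 1 ≤ level x := card_pos.2 ⟨i, by simp [level, h]⟩
        have : ((decide (t < level x) ≠ decide (t < level x - 1))) ↔ level x = t + 1 := by
          rw [ne_eq, decide_eq_decide]
          omega
        simp only [this]
      · rw [if_neg h, if_neg h]
        have : ((decide (t < level x) ≠ decide (t < level x + 1))) ↔ level x = t := by
          rw [ne_eq, decide_eq_decide]
          omega
        simp only [this]
    rw [Finset.sum_congr rfl (fun i _ => step i)]
    rw [Finset.sum_ite]
    simp only [sum_const, nsmul_eq_mul]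
    have c1 : (univ.filter fun i => x i = true).card = level x := rfl
    have c2 : (univ.filter fun i => ¬ (x i = true)).card = n - level x := by
      have := Finset.card_filter_add_card_filter_not
        (s := (univ : Finset (Fin n))) (p := fun i => x i = true)
      simp only [card_univ, Fintype.card_fin] at this
      unfold level; omega
    rw [c1, c2]
    rcases Nat.lt_trichotomy (level x) t with h | h | h
    · simp only [Nat.ne_of_lt h, if_false, Nat.ne_of_lt (by omega : level x < t + 1), mul_zero, add_zero, zero_add]
    · simp [h]
    · rcases Nat.eq_or_lt_of_le h with h' | h'
      · simp [← h', Nat.ne_of_gt h]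
      · simp [Nat.ne_of_gt h, Nat.ne_of_gt h', mul_zero]
  rw [Finset.sum_congr rfl (fun x _ => hx x)]
  rw [sum_level n (fun k => (if k = t + 1 then (k:ℝ) else 0) + (if k = t then ((n - k : ℕ) : ℝ) else 0))]
  have expand : ∀ k ∈ range (n+1),
      (n.choose k : ℝ) * ((if k = t + 1 then (k:ℝ) else 0) + (if k = t then ((n - k : ℕ) : ℝ) else 0))
      = (if k = t + 1 then ((n.choose (t+1) * (t+1) : ℕ) : ℝ) else 0)
        + (if k = t then ((n.choose t * (n - t) : ℕ) : ℝ) else 0) := by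
    intro k _
    split_ifs with h1 h2 <;> simp_all <;> push_cast <;> ring
  rw [Finset.sum_congr rfl expand, Finset.sum_add_distrib,
    Finset.sum_ite_eq' (range (n+1)) (t+1), Finset.sum_ite_eq' (range (n+1)) t]
  have nat_id : n.choose (t+1) * (t+1) + n.choose t * (n - t) = 2 * (n - t) * n.choose t := by
    rw [Nat.choose_succ_right_eq]; ring
  by_cases ht : t < n
  · rw [if_pos (mem_range.2 (by omega)), if_pos (mem_range.2 (by omega))]
    rw [← nat_id]; push_cast; ring
  · have h1 : n.choose (t+1) = 0 := Nat.choose_eq_zero_of_lt (by omega)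
    have h2 : n - t = 0 := by omega
    by_cases ht2 : t = n
    · subst ht2
      rw [if_neg (by simp), if_pos (mem_range.2 (by omega))]
      simp [h1, h2]
    · rw [if_neg (by simp; omega), if_neg (by simp; omega)]
      simp [h1, h2]
lemma exists_pow_le (C1 : ℝ) : ∃ N : ℕ, 5 ≤ N ∧ ∀ n : ℕ, N ≤ n → (n:ℝ) ^ C1 ≤ 2 ^ n := by
  have h := tendsto_pow_const_div_const_pow_of_one_lt ⌈C1⌉₊ (by norm_num : (1:ℝ) < 2)
  have h2 : ∀ᶠ n : ℕ in Filter.atTop, (n:ℝ) ^ ⌈C1⌉₊ / 2 ^ n < 1 :=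
    h.eventually_lt_const one_pos
  have h3 : ∀ᶠ n : ℕ in Filter.atTop, 5 ≤ n := Filter.eventually_ge_atTop 5
  obtain ⟨N, hN⟩ := (h2.and h3).exists_forall_of_atTop
  refine ⟨max N 5, le_max_right _ _, fun n hn => ?_⟩
  obtain ⟨hlt, hn5⟩ := hN n (le_trans (le_max_left _ _) hn)
  have hP0 : (0:ℝ) < 2 ^ n := by positivity
  have h1n : (1:ℝ) ≤ (n:ℝ) := by exact_mod_cast Nat.one_le_iff_ne_zero.2 (by omega)
  calc (n:ℝ) ^ C1 ≤ (n:ℝ) ^ (⌈C1⌉₊ : ℝ) :=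
        Real.rpow_le_rpow_of_exponent_le h1n (Nat.le_ceil C1)
    _ = (n:ℝ) ^ (⌈C1⌉₊ : ℕ) := Real.rpow_natCast _ _
    _ ≤ 2 ^ n := by rw [div_lt_one hP0] at hlt; linarith

/-- Fix `C1 ≥ 1`. For all sufficiently large `n`: if `θ` is the smallest integer
greater than `n/2` with `Pr[L(x) > θ] ≤ 1/n^{C1}`, and `f0(x) = 1 ↔ L(x) > θ`,
then `1/(6·n^{C1}) ≤ I[f0] ≤ 2n/n^{C1}`. -/
theorem threshold_influence_bounds (C1 : ℝ) (hC1 : 1 ≤ C1) :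
    ∃ N : ℕ, ∀ n : ℕ, N ≤ n → ∀ θ : ℕ, isMinimalThreshold C1 n θ →
      1 / (6 * (n : ℝ) ^ C1) ≤ influence n (fun x => decide (θ < level x)) ∧
        influence n (fun x => decide (θ < level x)) ≤ 2 * (n : ℝ) / (n : ℝ) ^ C1 := by
  obtain ⟨N, hN5, hNpow⟩ := exists_pow_le C1
  refine ⟨N, fun n hn θ hθ => ?_⟩
  obtain ⟨hθ1, hθ2, hθ3⟩ := hθ
  have hn5 : 5 ≤ n := le_trans hN5 hn
  set R := (n:ℝ) ^ C1 with hRdef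
  have h1n : (1:ℝ) ≤ (n:ℝ) := by exact_mod_cast Nat.one_le_iff_ne_zero.2 (by omega)
  have hR1 : 1 ≤ R := Real.one_le_rpow h1n (by linarith)
  have hRpos : 0 < R := lt_of_lt_of_le one_pos hR1
  have hP0 : (0:ℝ) < 2 ^ n := by positivity
  have hRP : R ≤ 2 ^ n := hNpow n hn
  have hnθ : n < 2 * θ := by
    have hlt : (n:ℝ) < 2 * (θ:ℝ) := by linarith
    exact_mod_cast hlt
  rw [tailProb_eq] at hθ2
  rw [influence_threshold]
  constructor
  · -- lower bound
    by_cases hcase : n < 2 * (θ - 1)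
    · -- Case A
      have hmin : ¬ (tailProb n (θ - 1) ≤ 1 / R) := by
        intro h
        have h2 : (n:ℝ)/2 < ((θ-1 : ℕ):ℝ) := by
          have : (n:ℝ) < 2 * ((θ-1:ℕ):ℝ) := by exact_mod_cast hcase
          linarith
        have := hθ3 (θ-1) h2 h
        omega
      push_neg at hmin
      rw [tailProb_eq] at hmin
      have hθn : θ - 1 < n := by
        by_contra hcon
        rw [Finset.Ioc_eq_empty (by omega)] at hmin
        simp only [Finset.sum_empty, zero_div] at hmin
        have : (0:ℝ) < 1 / R := by positivity
        linarith
      have hθltn : θ < n := by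
        by_contra hcon
        have hioc : Ioc (θ-1) n = {n} := by
          ext k; simp only [mem_Ioc, mem_singleton]; omega
        rw [hioc, Finset.sum_singleton, Nat.choose_self] at hmin
        have : 1 / (2:ℝ)^n ≤ 1 / R := one_div_le_one_div_of_le hRpos hRP
        push_cast at hmin
        linarith
      have hsum : (∑ k ∈ Ioc (θ-1) n, (n.choose k:ℝ))
          ≤ (((n - θ) + 1 : ℕ):ℝ) * (n.choose θ : ℝ) := by
        have hb := Finset.sum_le_card_nsmul (Ioc (θ-1) n) (fun k => (n.choose k:ℝ))
          ((n.choose θ : ℕ):ℝ)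
          (fun k hk => by
            rw [mem_Ioc] at hk
            show (n.choose k:ℝ) ≤ ((n.choose θ : ℕ):ℝ)
            exact_mod_cast choose_anti n (a := θ) (by omega) (by omega))
        rw [Nat.card_Ioc, nsmul_eq_mul] at hb
        have : (n - (θ - 1)) = (n - θ) + 1 := by omega
        rw [this] at hb
        exact_mod_cast hb
      set d : ℕ := n - θ with hddef
      have hd1 : 1 ≤ d := by omega
      have hd1' : (1:ℝ) ≤ (d:ℝ) := by exact_mod_cast hd1
      have hc0 : (0:ℝ) ≤ (n.choose θ : ℝ) := by positivity
      have hkey : 1 / R < (((d:ℝ) + 1)) * ((n.choose θ : ℝ) / 2^n) := by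
        calc 1 / R < (∑ k ∈ Ioc (θ-1) n, (n.choose k:ℝ)) / 2^n := hmin
          _ ≤ ((((d) + 1 : ℕ):ℝ) * (n.choose θ : ℝ)) / 2^n := by gcongr
          _ = ((d:ℝ) + 1) * ((n.choose θ : ℝ) / 2^n) := by push_cast; ring
      have hgoal : ((2 * d * n.choose θ : ℕ):ℝ) / 2^n
          = 2 * (d:ℝ) * ((n.choose θ : ℝ) / 2^n) := by push_cast; ring
      rw [hgoal]
      have hc2 : (0:ℝ) ≤ (n.choose θ : ℝ) / 2^n := by positivity
      have h6 : 1 / (6 * R) ≤ 1 / R := by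
        apply one_div_le_one_div_of_le hRpos; linarith
      calc 1 / (6 * R) ≤ 1 / R := h6
        _ ≤ ((d:ℝ) + 1) * ((n.choose θ : ℝ) / 2^n) := le_of_lt hkey
        _ ≤ 2 * (d:ℝ) * ((n.choose θ : ℝ) / 2^n) := by nlinarith
    · -- Case B : θ = n/2 + 1
      have hθm : θ = n/2 + 1 := by omega
      have f1 : 2^n ≤ (n+1) * n.choose (n/2) := by
        calc 2^n = ∑ m ∈ range (n+1), n.choose m := (Nat.sum_range_choose n).symm
          _ ≤ ∑ m ∈ range (n+1), n.choose (n/2) :=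
              Finset.sum_le_sum fun m _ => Nat.choose_le_middle m n
          _ = (n+1) * n.choose (n/2) := by
              rw [Finset.sum_const, card_range, smul_eq_mul]
      have f2 : n.choose (n/2) ≤ 2 * n.choose θ := by
        have key := Nat.choose_succ_right_eq n (n/2)
        have h2 : n.choose (n/2) * (n/2+1) ≤ (2 * n.choose (n/2+1)) * (n/2+1) := by
          calc n.choose (n/2) * (n/2+1) ≤ n.choose (n/2) * (2*(n - n/2)) :=
                Nat.mul_le_mul_left _ (by omega)
            _ = 2 * (n.choose (n/2) * (n - n/2)) := by ring
            _ = 2 * (n.choose (n/2+1) * (n/2+1)) := by rw [key]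
            _ = (2 * n.choose (n/2+1)) * (n/2+1) := by ring
        rw [hθm]
        exact Nat.le_of_mul_le_mul_right h2 (Nat.succ_pos _)
      have fnat : 2^n ≤ 6 * (2 * (n - θ) * n.choose θ) := by
        have h6d : n + 1 ≤ 6 * (n - θ) := by omega
        calc 2^n ≤ (n+1) * n.choose (n/2) := f1
          _ ≤ (6 * (n - θ)) * n.choose (n/2) := Nat.mul_le_mul_right _ h6d
          _ ≤ (6 * (n - θ)) * (2 * n.choose θ) := Nat.mul_le_mul_left _ f2
          _ = 6 * (2 * (n - θ) * n.choose θ) := by ring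
      have hreal : (1:ℝ)/6 ≤ ((2 * (n - θ) * n.choose θ : ℕ):ℝ) / 2^n := by
        rw [div_le_div_iff₀ (by norm_num) hP0]
        have : ((2:ℝ))^n ≤ 6 * ((2 * (n - θ) * n.choose θ : ℕ):ℝ) := by
          exact_mod_cast fnat
        linarith
      have h6 : 1 / (6 * R) ≤ 1 / 6 := by
        apply one_div_le_one_div_of_le (by norm_num); linarith
      linarith
  · -- upper bound
    by_cases htn : θ < n
    · have id1 : (2 * (n - θ) * n.choose θ : ℕ) = 2 * (θ+1) * n.choose (θ+1) := by
        have key := Nat.choose_succ_right_eq n θ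
        calc 2 * (n - θ) * n.choose θ = 2 * (n.choose θ * (n - θ)) := by ring
          _ = 2 * (n.choose (θ+1) * (θ+1)) := by rw [key]
          _ = 2 * (θ+1) * n.choose (θ+1) := by ring
      rw [id1]
      have hterm : (n.choose (θ+1) : ℝ) ≤ ∑ k ∈ Ioc θ n, (n.choose k:ℝ) :=
        Finset.single_le_sum (f := fun k => (n.choose k : ℝ))
          (fun k _ => by positivity) (by rw [mem_Ioc]; omega)
      have hθ1n : (θ:ℝ) + 1 ≤ (n:ℝ) := by exact_mod_cast htn
      have hcn : (0:ℝ) ≤ (n.choose (θ+1) : ℝ) := by positivity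
      calc ((2 * (θ+1) * n.choose (θ+1) : ℕ):ℝ) / 2^n
          = (2 * ((θ:ℝ)+1)) * ((n.choose (θ+1) : ℝ) / 2^n) := by push_cast; ring
        _ ≤ (2 * (n:ℝ)) * ((n.choose (θ+1) : ℝ) / 2^n) := by
            apply mul_le_mul_of_nonneg_right (by linarith) (by positivity)
        _ ≤ (2 * (n:ℝ)) * ((∑ k ∈ Ioc θ n, (n.choose k:ℝ)) / 2^n) := by
            gcongr
        _ ≤ (2 * (n:ℝ)) * (1 / R) := by
            apply mul_le_mul_of_nonneg_left hθ2 (by linarith)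
        _ = 2 * (n:ℝ) / R := by ring
    · have hz : n - θ = 0 := by omega
      rw [hz]
      simp only [Nat.mul_zero, Nat.zero_mul, mul_zero, Nat.cast_zero, zero_div]
      positivity
end

section
/- Fix a constant C2 ≥ 0. There exist c > 0 and N such that for all n ≥ N the following holds: let s = ⌊√n⌋ and m = ⌈2^s/n^{C2}⌉; let f be the random DNF with m clauses of width s, i.e., f(x) = 1 iff there is j ∈ [m] with x_i = 1 for all i in the random s-element subset S_j of [n], where S_1, …, S_m are independent and uniform. Then E[I[f]] ≥ c·√n/n^{C2}, where the expectation is over the random choice of S_1, …, S_m. -/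
open Finset

/-- The set of all tuples of `m` clauses, each clause an `s`-element subset of `[n]`. -/
def clauseTuples (n m s : ℕ) : Finset (Fin m → Finset (Fin n)) :=
  Finset.univ.filter (fun S => ∀ j, (S j).card = s)

/-- The DNF determined by the clause tuple `S`: `f(x) = 1` iff there is `j` with
`x_i = 1` for all `i ∈ S j`. -/
def dnfF (n m : ℕ) (S : Fin m → Finset (Fin n)) : (Fin n → Bool) → Bool :=
  fun x => decide (∃ j, ∀ i ∈ S j, x i = true)

def ones {n : ℕ} (x : Fin n → Bool) : Finset (Fin n) :=
  Finset.univ.filter (fun i => x i = true)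

lemma level_eq_card_ones {n : ℕ} (x : Fin n → Bool) : level x = (ones x).card := rfl

lemma card_clauseTuples (n m s : ℕ) : (clauseTuples n m s).card = (n.choose s) ^ m := by
  have h : clauseTuples n m s
      = Fintype.piFinset (fun _ : Fin m => (Finset.univ : Finset (Fin n)).powersetCard s) := by
    ext S
    simp [clauseTuples, Fintype.mem_piFinset, Finset.mem_powersetCard]
  rw [h, Fintype.card_piFinset]
  simp [Finset.card_powersetCard]

def onlySat {n m : ℕ} (S : Fin m → Finset (Fin n)) (x : Fin n → Bool) (j : Fin m) : Prop :=
  (S j ⊆ ones x) ∧ ∀ j', j' ≠ j → ¬ (S j' ⊆ ones x)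

instance {n m : ℕ} (S : Fin m → Finset (Fin n)) (x : Fin n → Bool) (j : Fin m) :
    Decidable (onlySat S x j) := by unfold onlySat; infer_instance

lemma card_onlySat (n m s : ℕ) (x : Fin n → Bool) (j : Fin m) :
    ((clauseTuples n m s).filter (fun S => onlySat S x j)).card
      = (level x).choose s * (n.choose s - (level x).choose s) ^ (m - 1) := by
  classical
  set G : Finset (Finset (Fin n)) := (ones x).powersetCard s with hG
  set B : Finset (Finset (Fin n)) :=
    ((Finset.univ : Finset (Fin n)).powersetCard s) \ G with hB
  have hGcard : G.card = (level x).choose s := by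
    rw [hG, Finset.card_powersetCard, level_eq_card_ones]
  have hBcard : B.card = n.choose s - (level x).choose s := by
    rw [hB, Finset.card_sdiff_of_subset (Finset.powersetCard_mono (Finset.subset_univ _))]
    simp [Finset.card_powersetCard, hGcard, hG, level_eq_card_ones]
  have h : (clauseTuples n m s).filter (fun S => onlySat S x j)
      = Fintype.piFinset (fun j' : Fin m => if j' = j then G else B) := by
    refine Finset.ext fun S => ?_
    rw [Finset.mem_filter]
    simp only [Finset.mem_filter, clauseTuples, Finset.mem_univ, true_and,
      Fintype.mem_piFinset, onlySat]
    constructor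
    · rintro ⟨hcard, hsat, hun⟩ j'
      by_cases hj : j' = j
      · subst hj; simp [hG, Finset.mem_powersetCard, hsat, hcard j']
      · simp only [hj, if_neg, ite_false, hB, Finset.mem_sdiff, hG,
          Finset.mem_powersetCard]
        exact ⟨⟨Finset.subset_univ _, hcard j'⟩, fun h => (hun j' hj) h.1⟩
    · intro hall
      refine ⟨fun j' => ?_, ?_, ?_⟩
      · have := hall j'
        by_cases hj : j' = j
        · rw [if_pos hj] at this
          exact ((Finset.mem_powersetCard).1 this).2
        · rw [if_neg hj] at this
          exact ((Finset.mem_powersetCard).1 ((Finset.mem_sdiff).1 this).1).2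
      · have := hall j
        rw [if_pos rfl] at this
        exact ((Finset.mem_powersetCard).1 this).1
      · intro j' hj hsub
        have := hall j'
        rw [if_neg hj] at this
        have hcard : (S j').card = s :=
          ((Finset.mem_powersetCard).1 ((Finset.mem_sdiff).1 this).1).2
        exact ((Finset.mem_sdiff).1 this).2
          ((Finset.mem_powersetCard).2 ⟨hsub, hcard⟩)
  rw [h, Fintype.card_piFinset]
  rw [← Finset.mul_prod_erase Finset.univ _ (Finset.mem_univ j)]
  rw [if_pos rfl, hGcard]
  congr 1
  have : ∀ j' ∈ Finset.univ.erase j, ((if j' = j then G else B).card) = B.card := by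
    intro j' hj'
    rw [if_neg (Finset.ne_of_mem_erase hj')]
  rw [Finset.prod_congr rfl this, Finset.prod_const, hBcard]
  congr 1
  simp [Finset.card_erase_of_mem]

lemma mem_ones_iff {n : ℕ} (x : Fin n → Bool) (i : Fin n) : i ∈ ones x ↔ x i = true := by
  simp [ones]

lemma subset_ones_iff {n : ℕ} (x : Fin n → Bool) (A : Finset (Fin n)) :
    A ⊆ ones x ↔ ∀ i ∈ A, x i = true := by
  simp [Finset.subset_iff, mem_ones_iff]

lemma dnf_true {n m : ℕ} (S : Fin m → Finset (Fin n)) (x : Fin n → Bool) (j : Fin m)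
    (h : S j ⊆ ones x) : dnfF n m S x = true := by
  simp only [dnfF, decide_eq_true_eq]
  exact ⟨j, (subset_ones_iff x (S j)).1 h⟩

lemma dnf_flip_false {n m : ℕ} (S : Fin m → Finset (Fin n)) (x : Fin n → Bool) (j : Fin m)
    (h : onlySat S x j) (i : Fin n) (hi : i ∈ S j) :
    dnfF n m S (Function.update x i (!(x i))) = false := by
  have hxi : x i = true := (subset_ones_iff x (S j)).1 h.1 i hi
  simp only [dnfF, decide_eq_false_iff_not]
  rintro ⟨j', hj'⟩
  by_cases hjj : j' = j
  · subst hjj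
    have := hj' i hi
    rw [Function.update_self, hxi] at this
    simp at this
  · have hns : ¬ (S j' ⊆ ones x) := h.2 j' hjj
    rw [subset_ones_iff] at hns
    push_neg at hns
    obtain ⟨i', hi', hxi'⟩ := hns
    have := hj' i' hi'
    by_cases hii : i' = i
    · subst hii; exact hxi' hxi
    · rw [Function.update_of_ne hii] at this
      exact hxi' this

lemma key_count (n m s : ℕ) (x : Fin n → Bool) :
    (s : ℝ) * m * ((level x).choose s) * (((n.choose s - (level x).choose s : ℕ)) : ℝ) ^ (m - 1)
      ≤ ∑ S ∈ clauseTuples n m s, ∑ i : Fin n,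
          (if dnfF n m S x ≠ dnfF n m S (Function.update x i (!(x i))) then (1 : ℝ) else 0) := by
  classical
  have step1 : ∀ S ∈ clauseTuples n m s,
      (∑ j : Fin m, (if onlySat S x j then (s:ℝ) else 0))
        ≤ ∑ i : Fin n,
            (if dnfF n m S x ≠ dnfF n m S (Function.update x i (!(x i))) then (1:ℝ) else 0) := by
    intro S hS
    have hcard : ∀ j, (S j).card = s := by
      simpa [clauseTuples] using hS
    by_cases h : ∃ j, onlySat S x j
    · obtain ⟨j0, hj0⟩ := h
      have hsum : (∑ j : Fin m, (if onlySat S x j then (s:ℝ) else 0)) = s := by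
        rw [Finset.sum_eq_single j0]
        · rw [if_pos hj0]
        · intro j _ hj
          rw [if_neg]
          intro hcontra
          exact hj0.2 j hj hcontra.1
        · intro h; exact absurd (Finset.mem_univ j0) h
      rw [hsum]
      calc (s:ℝ) = ∑ _i ∈ S j0, (1:ℝ) := by rw [Finset.sum_const, hcard j0]; simp
      _ = ∑ i ∈ S j0,
            (if dnfF n m S x ≠ dnfF n m S (Function.update x i (!(x i))) then (1:ℝ) else 0) := by
          refine Finset.sum_congr rfl (fun i hi => ?_)
          rw [if_pos]
          rw [dnf_true S x j0 hj0.1, dnf_flip_false S x j0 hj0 i hi]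
          simp
      _ ≤ _ := Finset.sum_le_sum_of_subset_of_nonneg (Finset.subset_univ _)
          (by intro i _ _; split <;> norm_num)
    · push_neg at h
      have h0 : (∑ j : Fin m, (if onlySat S x j then (s:ℝ) else 0)) = 0 := by
        simp [h]
      rw [h0]
      exact Finset.sum_nonneg (by intro i _; split <;> norm_num)
  have step2 : ∑ S ∈ clauseTuples n m s, ∑ j : Fin m, (if onlySat S x j then (s:ℝ) else 0)
      = (s : ℝ) * m * ((level x).choose s)
          * (((n.choose s - (level x).choose s : ℕ)) : ℝ) ^ (m - 1) := by
    rw [Finset.sum_comm]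
    have hj : ∀ j : Fin m, ∑ S ∈ clauseTuples n m s, (if onlySat S x j then (s:ℝ) else 0)
        = (s:ℝ) * ((level x).choose s) * (((n.choose s - (level x).choose s : ℕ)) : ℝ)^(m-1) := by
      intro j
      rw [← Finset.sum_filter]
      rw [Finset.sum_const, card_onlySat n m s x j]
      push_cast
      ring
    rw [Finset.sum_congr rfl (fun j _ => hj j), Finset.sum_const]
    simp only [Finset.card_univ, Fintype.card_fin, nsmul_eq_mul]
    ring
  rw [← step2]
  exact Finset.sum_le_sum step1

lemma card_level_eq (n k : ℕ) :
    ((Finset.univ : Finset (Fin n → Bool)).filter (fun x => level x = k)).card = n.choose k := by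
  classical
  rw [← Fintype.card_subtype]
  have e : {x : Fin n → Bool // level x = k} ≃ {A : Finset (Fin n) // A.card = k} :=
    { toFun := fun p => ⟨ones p.1, by rw [← level_eq_card_ones]; exact p.2⟩
      invFun := fun p => ⟨fun i => decide (i ∈ p.1), by
        rw [level_eq_card_ones]
        have h : ones (fun i => decide (i ∈ p.1)) = p.1 := by ext i; simp [ones]
        rw [h]; exact p.2⟩
      left_inv := fun p => by
        apply Subtype.ext
        funext i
        simp [ones]
      right_inv := fun p => by
        apply Subtype.ext
        ext i
        simp [ones] }
  rw [Fintype.card_congr e, Fintype.card_finset_len]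
  simp

lemma card_level_mem (n : ℕ) (K : Finset ℕ) :
    ((Finset.univ : Finset (Fin n → Bool)).filter (fun x => level x ∈ K)).card
      = ∑ k ∈ K, n.choose k := by
  classical
  rw [Finset.card_eq_sum_card_fiberwise
    (f := fun x : Fin n → Bool => level x) (t := K)
    (s := (Finset.univ : Finset (Fin n → Bool)).filter (fun x => level x ∈ K))
    (fun x hx => (Finset.mem_filter.1 hx).2)]
  refine Finset.sum_congr rfl fun k hk => ?_
  rw [Finset.filter_filter, ← card_level_eq n k]
  congr 1
  ext x
  simp only [Finset.mem_filter, Finset.mem_univ, true_and]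
  constructor
  · rintro ⟨_, h⟩; exact h
  · intro h; exact ⟨h ▸ hk, h⟩

lemma exp_le_one_sub {x : ℝ} (h0 : 0 ≤ x) (h1 : x ≤ 1/2) : Real.exp (-(2*x)) ≤ 1 - x := by
  have h2 : 1 + 2*x ≤ Real.exp (2*x) := by linarith [Real.add_one_le_exp (2*x)]
  have hpos : (0:ℝ) < 1 + 2*x := by linarith
  rw [Real.exp_neg]
  have h3 : (Real.exp (2*x))⁻¹ ≤ (1+2*x)⁻¹ := inv_anti₀ hpos h2
  refine h3.trans ?_
  rw [inv_eq_one_div, div_le_iff₀ hpos]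
  nlinarith

lemma sixteen_pow_le : ∀ h : ℕ, 1 ≤ h → 16 ^ h ≤ 4 * h * (Nat.centralBinom h)^2 := by
  intro h
  induction h with
  | zero => omega
  | succ k ih =>
    intro _
    rcases Nat.eq_zero_or_pos k with hk | hk
    · subst hk
      norm_num [Nat.centralBinom]
    · have ihk := ih hk
      have key : (k + 1) * Nat.centralBinom (k + 1) = 2 * (2 * k + 1) * Nat.centralBinom k :=
        Nat.succ_mul_centralBinom_succ k
      have hpos : 0 < (k+1)^2 := by positivity
      refine Nat.le_of_mul_le_mul_left ?_ hpos
      have expand : (k+1)^2 * (4*(k+1)*(Nat.centralBinom (k+1))^2)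
          = 4*(k+1)*((k+1) * Nat.centralBinom (k+1))^2 := by ring
      rw [expand, key]
      have h1 : (k+1)^2 * 16^(k+1) = 16*(k+1)^2*16^k := by ring
      rw [h1]
      have h2 : 16*(k+1)^2*16^k ≤ 16*(k+1)^2*(4*k*(Nat.centralBinom k)^2) :=
        Nat.mul_le_mul_left _ ihk
      refine h2.trans ?_
      have h3 : 4*k*(k+1) ≤ (2*k+1)^2 := by nlinarith
      calc 16*(k+1)^2*(4*k*(Nat.centralBinom k)^2)
          = (4*k*(k+1)) * (16*(k+1)*(Nat.centralBinom k)^2) := by ring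
        _ ≤ ((2*k+1)^2) * (16*(k+1)*(Nat.centralBinom k)^2) := Nat.mul_le_mul_right _ h3
        _ = 4*(k+1)*(2*(2*k+1)*Nat.centralBinom k)^2 := by ring

lemma central_binom_sqrt (h : ℕ) (hh : 1 ≤ h) :
    (4:ℝ)^h ≤ 2 * Real.sqrt h * (Nat.centralBinom h) := by
  have hcbR : (16:ℝ)^h ≤ 4 * h * ((Nat.centralBinom h : ℝ))^2 := by
    exact_mod_cast sixteen_pow_le h hh
  have hb : (0:ℝ) ≤ 2 * Real.sqrt h * (Nat.centralBinom h) := by positivity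
  have ha : (0:ℝ) ≤ (4:ℝ)^h := by positivity
  have h16 : ((4:ℝ)^h)^2 = (16:ℝ)^h := by
    rw [← pow_mul, mul_comm, pow_mul]; norm_num
  have hsq : (2 * Real.sqrt h * ((Nat.centralBinom h : ℝ)))^2
      = 4 * ((Real.sqrt h)^2) * ((Nat.centralBinom h : ℝ))^2 := by ring
  rw [Real.sq_sqrt (by positivity : (0:ℝ) ≤ (h:ℝ))] at hsq
  have hsq2 : ((4:ℝ)^h)^2 ≤ (2 * Real.sqrt h * ((Nat.centralBinom h : ℝ)))^2 := by
    rw [h16, hsq]; exact hcbR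
  exact (pow_le_pow_iff_left₀ ha hb two_ne_zero).1 hsq2

lemma central_lower (n : ℕ) (hn : 2 ≤ n) :
    (2:ℝ)^n ≤ 4 * Real.sqrt n * (n.choose (n/2)) := by
  obtain ⟨h, rfl | rfl⟩ := Nat.even_or_odd' n
  · have hh : 1 ≤ h := by omega
    have h4 := central_binom_sqrt h hh
    have hdiv : (2*h)/2 = h := by omega
    rw [hdiv]
    have hch : ((2*h).choose h : ℝ) = (Nat.centralBinom h : ℝ) := by rw [Nat.centralBinom]
    rw [hch]
    have h2n : (2:ℝ)^(2*h) = (4:ℝ)^h := by rw [pow_mul]; norm_num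
    rw [h2n]
    have hsqrt : Real.sqrt h ≤ Real.sqrt ((2*h : ℕ):ℝ) := by
      apply Real.sqrt_le_sqrt; push_cast; linarith [Nat.cast_nonneg (α := ℝ) h]
    nlinarith [Real.sqrt_nonneg (h:ℝ), Nat.cast_nonneg (α := ℝ) (Nat.centralBinom h)]
  · have hh : 1 ≤ h := by omega
    have h4 := central_binom_sqrt h hh
    have hdiv : (2*h+1)/2 = h := by omega
    rw [hdiv]
    have hch : (Nat.centralBinom h : ℝ) ≤ ((2*h+1).choose h : ℝ) := by
      exact_mod_cast Nat.choose_le_choose h (by omega : 2*h ≤ 2*h+1)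
    have h2n : (2:ℝ)^(2*h+1) = 2 * (4:ℝ)^h := by rw [pow_succ, pow_mul]; ring_nf
    rw [h2n]
    have hsqrt : Real.sqrt h ≤ Real.sqrt ((2*h+1 : ℕ):ℝ) := by
      apply Real.sqrt_le_sqrt; push_cast; linarith [Nat.cast_nonneg (α := ℝ) h]
    nlinarith [Real.sqrt_nonneg (h:ℝ), Nat.cast_nonneg (α := ℝ) (Nat.centralBinom h),
      Nat.cast_nonneg (α := ℝ) ((2*h+1).choose h),
      Real.sqrt_nonneg (((2*h+1:ℕ)):ℝ), pow_pos (show (0:ℝ) < 4 by norm_num) h]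

lemma choose_telescope (n b s : ℕ) (ρ : ℝ) (hρ0 : 0 ≤ ρ)
    (hρ : ∀ t, b ≤ t → t < b + s → ρ * ((t:ℝ)+1) ≤ ((n - t : ℕ) : ℝ)) :
    ∀ d, d ≤ s → ρ^d * (n.choose b) ≤ n.choose (b + d) := by
  intro d
  induction d with
  | zero => intro _; simp
  | succ e ih =>
    intro hd
    have ihe := ih (by omega)
    have hrec : (n.choose (b+e+1) : ℝ) * ((b+e:ℝ)+1) = (n.choose (b+e) : ℝ) * ((n - (b+e) : ℕ):ℝ) := by
      have := Nat.choose_succ_right_eq n (b+e)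
      exact_mod_cast congrArg (Nat.cast (R := ℝ)) this
    have hpos : (0:ℝ) < (b+e:ℝ)+1 := by positivity
    rw [show b + (e+1) = (b+e)+1 by ring]
    rw [← mul_le_mul_iff_of_pos_right hpos]
    calc ρ^(e+1) * (n.choose b) * ((b+e:ℝ)+1)
        = (ρ * ((b+e:ℝ)+1)) * (ρ^e * (n.choose b)) := by ring
      _ ≤ ((n - (b+e) : ℕ):ℝ) * (n.choose (b+e)) := by
          have hq := hρ (b+e) (by omega) (by omega)
          push_cast at hq ⊢
          apply mul_le_mul hq ihe (by positivity) ?_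
          have := hρ (b+e) (by omega) (by omega)
          push_cast at this
          nlinarith [hρ0, Nat.cast_nonneg (α := ℝ) b, Nat.cast_nonneg (α := ℝ) e]
      _ = (n.choose (b+e+1) : ℝ) * ((b+e:ℝ)+1) := by rw [hrec]; ring

lemma choose_ratio_lower (n k s : ℕ) :
    (((k+1-s:ℕ)) : ℝ)^s * (n.choose s) ≤ ((n:ℝ))^s * (k.choose s) := by
  have hf : (0:ℝ) < (Nat.factorial s : ℝ) := by exact_mod_cast Nat.factorial_pos s
  have h1 : (((k + 1 - s : ℕ):ℝ)) ^ s ≤ (Nat.factorial s : ℝ) * (k.choose s) := by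
    have := Nat.pow_le_choose (α := ℝ) s k
    rw [div_le_iff₀ hf] at this
    push_cast at this ⊢
    linarith
  have h2 : (Nat.factorial s : ℝ) * (n.choose s) ≤ (n:ℝ)^s := by
    have := Nat.choose_le_pow_div (α := ℝ) s n
    rw [le_div_iff₀ hf] at this
    linarith
  calc (((k+1-s:ℕ)) : ℝ)^s * (n.choose s)
      ≤ ((Nat.factorial s : ℝ) * (k.choose s)) * (n.choose s) := by
        apply mul_le_mul_of_nonneg_right h1 (by positivity)
    _ = ((Nat.factorial s : ℝ) * (n.choose s)) * (k.choose s) := by ring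
    _ ≤ (n:ℝ)^s * (k.choose s) := by
        apply mul_le_mul_of_nonneg_right h2 (by positivity)

lemma choose_ratio_upper (n k s : ℕ) :
    (((n+1-s:ℕ)) : ℝ)^s * (k.choose s) ≤ ((k:ℝ))^s * (n.choose s) := by
  have hf : (0:ℝ) < (Nat.factorial s : ℝ) := by exact_mod_cast Nat.factorial_pos s
  have h1 : (((n + 1 - s : ℕ):ℝ)) ^ s ≤ (Nat.factorial s : ℝ) * (n.choose s) := by
    have := Nat.pow_le_choose (α := ℝ) s n
    rw [div_le_iff₀ hf] at this
    push_cast at this ⊢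
    linarith
  have h2 : (Nat.factorial s : ℝ) * (k.choose s) ≤ (k:ℝ)^s := by
    have := Nat.choose_le_pow_div (α := ℝ) s k
    rw [le_div_iff₀ hf] at this
    linarith
  calc (((n+1-s:ℕ)) : ℝ)^s * (k.choose s)
      ≤ ((Nat.factorial s : ℝ) * (n.choose s)) * (k.choose s) := by
        apply mul_le_mul_of_nonneg_right h1 (by positivity)
    _ = ((Nat.factorial s : ℝ) * (k.choose s)) * (n.choose s) := by ring
    _ ≤ (k:ℝ)^s * (n.choose s) := by
        apply mul_le_mul_of_nonneg_right h2 (by positivity)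

set_option maxHeartbeats 4000000 in
/-- Fix `C2 ≥ 0`. There exist `c > 0` and `N` such that for all `n ≥ N`, with
`s = ⌊√n⌋` and `m = ⌈2^s/n^{C2}⌉`, the random DNF with `m` independent uniformly
random `s`-element clauses satisfies `E[I[f]] ≥ c·√n/n^{C2}` (the expectation being
the average of `I[f_S]` over all clause tuples `S`). -/
theorem random_dnf_expected_influence (C2 : ℝ) (hC2 : 0 ≤ C2) :
    ∃ c : ℝ, 0 < c ∧ ∃ N : ℕ, ∀ n : ℕ, N ≤ n →
      c * Real.sqrt n / (n : ℝ) ^ C2 ≤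
        (∑ S ∈ clauseTuples n ⌈(2 : ℝ) ^ Nat.sqrt n / (n : ℝ) ^ C2⌉₊ (Nat.sqrt n),
            influence n (dnfF n ⌈(2 : ℝ) ^ Nat.sqrt n / (n : ℝ) ^ C2⌉₊ S)) /
          ((clauseTuples n ⌈(2 : ℝ) ^ Nat.sqrt n / (n : ℝ) ^ C2⌉₊ (Nat.sqrt n)).card : ℝ) := by
  refine ⟨Real.exp (-(16 + 2 * Real.exp 4)) / 16, by positivity, 1000000, ?_⟩
  intro n hn
  set s := Nat.sqrt n with hs_def
  set m := ⌈(2 : ℝ) ^ s / (n : ℝ) ^ C2⌉₊ with hm_def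
  set b := n / 2 with hb_def
  set T := n.choose s with hT_def
  clear_value s m b T
  have hn0 : 0 < n := by omega
  have hnR1 : (1:ℝ) ≤ n := by exact_mod_cast hn0
  have hnR : (1000000:ℝ) ≤ n := by exact_mod_cast hn
  have hnRpos : (0:ℝ) < n := by linarith
  have hs1000 : 1000 ≤ s := by
    rw [hs_def]; exact Nat.le_sqrt.2 (by omega)
  have hs_le_n : s ≤ n := by rw [hs_def]; exact Nat.sqrt_le_self n
  have hssn : s * s ≤ n := by
    rw [hs_def]
    have := Nat.sqrt_le' n
    nlinarith [this]
  have hnss : n < (s+1)*(s+1) := by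
    rw [hs_def]
    have := Nat.lt_succ_sqrt' n
    nlinarith [this]
  have hsR : (1000:ℝ) ≤ s := by exact_mod_cast hs1000
  have hs2R : (s:ℝ)*(s:ℝ) ≤ n := by exact_mod_cast hssn
  have hn4s2 : (n:ℝ) ≤ 4*(s:ℝ)*(s:ℝ) := by
    have h1 : (n:ℝ) ≤ ((s:ℝ)+1)*((s:ℝ)+1) := by
      have : n + 1 ≤ (s+1)*(s+1) := hnss
      have := (Nat.cast_le (α := ℝ)).2 this
      push_cast at this
      linarith
    nlinarith
  have h20s : 20 * s ≤ n := le_trans (Nat.mul_le_mul_right s (by omega)) hssn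
  have h20sR : 20 * (s:ℝ) ≤ n := by exact_mod_cast h20s
  have hsb : s ≤ b := by omega
  have hbs_n : b + s ≤ n := by omega
  have hsqrt_le : Real.sqrt n ≤ 2*(s:ℝ) := by
    rw [show (2*(s:ℝ)) = Real.sqrt ((2*(s:ℝ))^2) by
      rw [Real.sqrt_sq (by positivity)]]
    apply Real.sqrt_le_sqrt
    nlinarith
  have hle_sqrt : (s:ℝ) ≤ Real.sqrt n := by
    rw [show ((s:ℝ)) = Real.sqrt ((s:ℝ)^2) by rw [Real.sqrt_sq (by positivity)]]
    apply Real.sqrt_le_sqrt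
    nlinarith
  have hsqrt_pos : (0:ℝ) < Real.sqrt n := by positivity
  have hTpos : 0 < T := by rw [hT_def]; exact Nat.choose_pos hs_le_n
  have hTR : (0:ℝ) < T := by exact_mod_cast hTpos
  have hZ : (0:ℝ) < (n:ℝ)^C2 := Real.rpow_pos_of_pos hnRpos _
  have hZ1 : (1:ℝ) ≤ (n:ℝ)^C2 := Real.one_le_rpow hnR1 hC2
  have hm1 : 1 ≤ m := by rw [hm_def]; exact Nat.ceil_pos.2 (by positivity)
  have hmge : (2:ℝ)^s / (n:ℝ)^C2 ≤ m := by rw [hm_def]; exact Nat.le_ceil _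
  have hm2s : m ≤ 2^s := by
    rw [hm_def]
    apply Nat.ceil_le.2
    push_cast
    rw [div_le_iff₀ hZ]
    nlinarith [pow_pos (show (0:ℝ) < 2 by norm_num) s]
  -- bounds on (k.choose s) for k in [b, b+s)
  have hexp4 : Real.exp (-(4:ℝ)) ≤ Real.exp (-(4*(s:ℝ)*(s:ℝ)/n)) := by
    apply Real.exp_le_exp.2
    rw [neg_le_neg_iff, div_le_iff₀ hnRpos]
    linarith [hs2R]
  have hAlow : ∀ k, b ≤ k → k < b + s →
      Real.exp (-(4:ℝ)) * (1/2:ℝ)^s * T ≤ (k.choose s : ℝ) := by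
    intro k hk1 hk2
    have hnat : n ≤ 2*(k+1-s) + 2*s := by omega
    set X : ℝ := ((k+1-s:ℕ):ℝ) with hX_def
    have hXcast : (n:ℝ) ≤ 2*X + 2*(s:ℝ) := by
      rw [hX_def]; exact_mod_cast hnat
    have hX0 : 0 ≤ X := by rw [hX_def]; positivity
    have hu : (1/2:ℝ) * (1 - 2*(s:ℝ)/n) ≤ X/n := by
      have h1 : (1/2:ℝ) * (1 - 2*(s:ℝ)/n) = ((n:ℝ) - 2*s)/(2*n) := by
        field_simp
      rw [h1, div_le_div_iff₀ (by positivity) hnRpos]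
      calc ((n:ℝ) - 2*(s:ℝ)) * n ≤ (2*X) * n :=
            mul_le_mul_of_nonneg_right (by linarith) hnRpos.le
        _ = X * (2*n) := by ring
    have hu0 : (0:ℝ) ≤ (1/2:ℝ) * (1 - 2*(s:ℝ)/n) := by
      have h : 2*(s:ℝ)/n ≤ 1/2 := by
        rw [div_le_iff₀ hnRpos]; linarith
      linarith
    have hx : Real.exp (-(2*(2*(s:ℝ)/n))) ≤ 1 - 2*(s:ℝ)/n := by
      apply exp_le_one_sub
      · positivity
      · rw [div_le_iff₀ hnRpos]; linarith
    have hpow : Real.exp (-(4:ℝ)) * (1/2:ℝ)^s ≤ ((1/2:ℝ) * (1 - 2*(s:ℝ)/n))^s := by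
      rw [mul_pow]
      have h2 : Real.exp (-(2*(2*(s:ℝ)/n)))^s ≤ (1 - 2*(s:ℝ)/n)^s :=
        pow_le_pow_left₀ (Real.exp_nonneg _) hx s
      have h3 : Real.exp (-(2*(2*(s:ℝ)/n)))^s = Real.exp (-(4*(s:ℝ)*(s:ℝ)/n)) := by
        rw [← Real.exp_nat_mul]
        congr 1
        ring
      rw [h3] at h2
      calc Real.exp (-(4:ℝ)) * (1/2:ℝ)^s ≤ Real.exp (-(4*(s:ℝ)*(s:ℝ)/n)) * (1/2:ℝ)^s := by
            apply mul_le_mul_of_nonneg_right hexp4 (by positivity)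
        _ ≤ (1 - 2*(s:ℝ)/n)^s * (1/2:ℝ)^s := by
            apply mul_le_mul_of_nonneg_right h2 (by positivity)
        _ = (1/2:ℝ)^s * (1 - 2*(s:ℝ)/n)^s := by ring
    have hratio : (X/n)^s * T ≤ (k.choose s : ℝ) := by
      have h := choose_ratio_lower n k s
      rw [div_pow, div_mul_eq_mul_div, div_le_iff₀ (by positivity : (0:ℝ) < (n:ℝ)^s)]
      calc X^s * (T:ℝ) = (((k+1-s:ℕ)):ℝ)^s * (n.choose s) := by rw [hX_def, hT_def]
        _ ≤ ((n:ℝ))^s * (k.choose s) := h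
        _ = (k.choose s : ℝ) * (n:ℝ)^s := by ring
    calc Real.exp (-(4:ℝ)) * (1/2:ℝ)^s * T
        ≤ ((1/2:ℝ) * (1 - 2*(s:ℝ)/n))^s * T := by
          apply mul_le_mul_of_nonneg_right hpow hTR.le
      _ ≤ (X/n)^s * T := by
          apply mul_le_mul_of_nonneg_right (pow_le_pow_left₀ hu0 hu s) hTR.le
      _ ≤ (k.choose s : ℝ) := hratio
  have hAup : ∀ k, b ≤ k → k < b + s →
      (k.choose s : ℝ) ≤ Real.exp (4:ℝ) * (1/2:ℝ)^s * T := by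
    intro k hk1 hk2
    set W : ℝ := ((n+1-s:ℕ):ℝ) with hW_def
    have hWcast : W = (n:ℝ)+1-(s:ℝ) := by
      rw [hW_def, Nat.cast_sub (by omega)]
      push_cast
      ring
    have hWpos : (0:ℝ) < W := by rw [hWcast]; linarith
    have h2k : 2*(k:ℝ) ≤ (n:ℝ) + 2*(s:ℝ) := by
      have h : 2*k ≤ n + 2*s := by omega
      exact_mod_cast h
    have hprod : 20*((s:ℝ)*(s:ℝ)) ≤ (s:ℝ)*(n:ℝ) := by
      have := mul_le_mul_of_nonneg_left h20sR (by positivity : (0:ℝ) ≤ (s:ℝ))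
      linarith [this]
    have hv : (k:ℝ)/W ≤ ((n:ℝ)+4*(s:ℝ))/(2*n) := by
      rw [div_le_div_iff₀ hWpos (by positivity)]
      rw [hWcast]
      have hkn : 2*(k:ℝ)*n ≤ ((n:ℝ)+2*(s:ℝ))*n :=
        mul_le_mul_of_nonneg_right h2k hnRpos.le
      linarith [hkn, hprod, hsR, hnRpos.le]
    have hv0 : (0:ℝ) ≤ (k:ℝ)/W := by positivity
    have hratio : (k.choose s : ℝ) ≤ ((k:ℝ)/W)^s * T := by
      have h := choose_ratio_upper n k s
      rw [div_pow, div_mul_eq_mul_div, le_div_iff₀ (by positivity : (0:ℝ) < W^s)]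
      calc (k.choose s:ℝ) * W^s = (((n+1-s:ℕ)):ℝ)^s * (k.choose s) := by rw [hW_def]; ring
        _ ≤ ((k:ℝ))^s * (n.choose s) := h
        _ = (k:ℝ)^s * T := by rw [hT_def]
    have h1x : (1+4*(s:ℝ)/n) ≤ Real.exp (4*(s:ℝ)/n) := by
      have := Real.add_one_le_exp (4*(s:ℝ)/n); linarith
    have hpow2 : ((1:ℝ)+4*(s:ℝ)/n)^s ≤ Real.exp (4*(s:ℝ)*(s:ℝ)/n) := by
      calc ((1:ℝ)+4*(s:ℝ)/n)^s ≤ Real.exp (4*(s:ℝ)/n)^s :=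
            pow_le_pow_left₀ (by positivity) h1x s
        _ = Real.exp (4*(s:ℝ)*(s:ℝ)/n) := by
            rw [← Real.exp_nat_mul]; congr 1; ring
    have hexp4' : Real.exp (4*(s:ℝ)*(s:ℝ)/n) ≤ Real.exp 4 :=
      Real.exp_le_exp.2 (by rw [div_le_iff₀ hnRpos]; linarith [hs2R])
    have heq : ((n:ℝ)+4*(s:ℝ))/(2*n) = (1/2:ℝ)*(1+4*(s:ℝ)/n) := by
      field_simp
    calc (k.choose s:ℝ) ≤ ((k:ℝ)/W)^s * T := hratio
      _ ≤ (((n:ℝ)+4*(s:ℝ))/(2*n))^s * T :=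
          mul_le_mul_of_nonneg_right (pow_le_pow_left₀ hv0 hv s) hTR.le
      _ = ((1/2:ℝ)^s * ((1:ℝ)+4*(s:ℝ)/n)^s) * T := by
          rw [heq, mul_pow]
      _ ≤ ((1/2:ℝ)^s * Real.exp 4) * T := by
          apply mul_le_mul_of_nonneg_right _ hTR.le
          exact mul_le_mul_of_nonneg_left (hpow2.trans hexp4') (by positivity)
      _ = Real.exp 4 * (1/2:ℝ)^s * T := by ring
  -- lower bound on choose n k for k in [b, b+s)
  have hNKlow : ∀ k, b ≤ k → k < b + s →
      Real.exp (-(12:ℝ)) * (n.choose b : ℝ) ≤ (n.choose k : ℝ) := by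
    have hbsR : (0:ℝ) < (b:ℝ) + (s:ℝ) := by
      have : (0:ℝ) ≤ (b:ℝ) := by positivity
      linarith
    set ρ : ℝ := ((n - (b+s) : ℕ):ℝ) / ((b:ℝ) + (s:ℝ)) with hρ_def
    have hρ0 : 0 ≤ ρ := by rw [hρ_def]; positivity
    have hcast1 : ((n - (b+s) : ℕ):ℝ) = (n:ℝ) - b - s := by
      rw [Nat.cast_sub hbs_n]; push_cast; ring
    have hb2 : 2*b ≤ n := by omega
    have hb2' : n ≤ 2*b+1 := by omega
    have hbR : 2*(b:ℝ) ≤ n := by exact_mod_cast hb2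
    have hbR' : (n:ℝ) ≤ 2*(b:ℝ)+1 := by exact_mod_cast hb2'
    have hρ1 : ρ ≤ 1 := by
      rw [hρ_def, div_le_one hbsR, hcast1]; linarith
    have hρcond : ∀ t, b ≤ t → t < b + s → ρ * ((t:ℝ)+1) ≤ ((n - t : ℕ) : ℝ) := by
      intro t ht1 ht2
      have ht3 : (t:ℝ)+1 ≤ (b:ℝ)+s := by
        have : t+1 ≤ b+s := by omega
        exact_mod_cast this
      have h1 : ρ * ((t:ℝ)+1) ≤ ρ * ((b:ℝ)+s) :=
        mul_le_mul_of_nonneg_left ht3 hρ0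
      have h2 : ρ * ((b:ℝ)+s) = ((n - (b+s) : ℕ):ℝ) := by
        rw [hρ_def, div_mul_cancel₀ _ (ne_of_gt hbsR)]
      have h3 : ((n - (b+s):ℕ):ℝ) ≤ ((n - t : ℕ):ℝ) := by
        exact_mod_cast Nat.sub_le_sub_left (by omega : t ≤ b+s) n
      linarith
    have hρlow : 1 - 6*(s:ℝ)/n ≤ ρ := by
      rw [hρ_def, le_div_iff₀ hbsR, hcast1]
      have hsb1 : (s:ℝ) ≤ (s:ℝ)*(b:ℝ) := by
        have hb1 : (1:ℝ) ≤ (b:ℝ) := by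
          have : 1 ≤ b := by omega
          exact_mod_cast this
        nlinarith [hsR, hb1]
      have h6 : 2*(s:ℝ) ≤ 6*(s:ℝ)*((b:ℝ)+s)/n := by
        rw [le_div_iff₀ hnRpos]
        have hh := mul_le_mul_of_nonneg_left hbR' (by positivity : (0:ℝ) ≤ (s:ℝ))
        nlinarith [hh, hsb1, hsR]
      have hexpand : (1 - 6*(s:ℝ)/n) * ((b:ℝ)+s)
          = ((b:ℝ)+s) - 6*(s:ℝ)*((b:ℝ)+s)/n := by ring
      rw [hexpand]
      linarith [h6]
    have h6sn : 6*(s:ℝ)/n ≤ 1/2 := by rw [div_le_iff₀ hnRpos]; linarith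
    have hxρ : Real.exp (-(2*(6*(s:ℝ)/n))) ≤ ρ :=
      le_trans (exp_le_one_sub (by positivity) h6sn) hρlow
    have hρs : Real.exp (-(12:ℝ)) ≤ ρ^s := by
      calc Real.exp (-(12:ℝ)) ≤ Real.exp (-(12*(s:ℝ)*(s:ℝ)/n)) :=
            Real.exp_le_exp.2 (by rw [neg_le_neg_iff, div_le_iff₀ hnRpos]; linarith [hs2R])
        _ = Real.exp (-(2*(6*(s:ℝ)/n)))^s := by rw [← Real.exp_nat_mul]; congr 1; ring
        _ ≤ ρ^s := pow_le_pow_left₀ (Real.exp_nonneg _) hxρ s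
    intro k hk1 hk2
    have htel := choose_telescope n b s ρ hρ0 hρcond (k - b) (by omega)
    have hbk : b + (k - b) = k := by omega
    rw [hbk] at htel
    have hmono : ρ^s ≤ ρ^(k-b) := pow_le_pow_of_le_one hρ0 hρ1 (by omega)
    calc Real.exp (-(12:ℝ)) * (n.choose b : ℝ) ≤ ρ^s * (n.choose b) :=
          mul_le_mul_of_nonneg_right hρs (by positivity)
      _ ≤ ρ^(k-b) * (n.choose b) := mul_le_mul_of_nonneg_right hmono (by positivity)
      _ ≤ (n.choose k : ℝ) := htel
  
  -- abbreviations
  set K : Finset ℕ := Finset.Ico b (b+s) with hK_def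
  set q : ℝ := Real.exp 4 * (1/2:ℝ)^s with hq_def
  have hq0 : 0 ≤ q := by rw [hq_def]; positivity
  have hexp4_81 : Real.exp 4 ≤ 81 := by
    have h1 : Real.exp 1 ≤ 2.7182818286 := (Real.exp_one_lt_d9).le
    calc Real.exp 4 = (Real.exp 1)^(4:ℕ) := by
          rw [← Real.exp_nat_mul]; norm_num
      _ ≤ 2.7182818286^(4:ℕ) := pow_le_pow_left₀ (Real.exp_pos 1).le h1 4
      _ ≤ 81 := by norm_num
  have hhalfs : (1/2:ℝ)^s ≤ (1/2:ℝ)^(8:ℕ) :=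
    pow_le_pow_of_le_one (by norm_num) (by norm_num) (by omega)
  have hq_half : q ≤ 1/2 := by
    rw [hq_def]
    calc Real.exp 4 * (1/2:ℝ)^s ≤ 81 * (1/2:ℝ)^(8:ℕ) :=
          mul_le_mul hexp4_81 hhalfs (by positivity) (by norm_num)
      _ ≤ 1/2 := by norm_num
  have hTmA : ∀ k, b ≤ k → k < b + s →
      Real.exp (-(2*Real.exp 4)) * (T:ℝ)^(m-1) ≤ (((T - k.choose s : ℕ)):ℝ)^(m-1) := by
    intro k hk1 hk2
    have hAleT : k.choose s ≤ T := by
      rw [hT_def]; exact Nat.choose_le_choose s (by omega : k ≤ n)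
    have hcast : (((T - k.choose s : ℕ)):ℝ) = (T:ℝ) - (k.choose s:ℝ) := by
      rw [Nat.cast_sub hAleT]
    have hAq : (k.choose s : ℝ) ≤ q * (T:ℝ) := hAup k hk1 hk2
    have h1mq : Real.exp (-(2*q)) ≤ 1 - q := exp_le_one_sub hq0 hq_half
    have hbase : Real.exp (-(2*q)) * (T:ℝ) ≤ (((T - k.choose s : ℕ)):ℝ) := by
      rw [hcast]
      calc Real.exp (-(2*q)) * (T:ℝ) ≤ (1-q) * (T:ℝ) :=
            mul_le_mul_of_nonneg_right h1mq hTR.le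
        _ ≤ (T:ℝ) - (k.choose s:ℝ) := by
            have : (1-q)*(T:ℝ) = (T:ℝ) - q*(T:ℝ) := by ring
            rw [this]; linarith [hAq]
    have hpow : (Real.exp (-(2*q)) * (T:ℝ))^(m-1) ≤ (((T - k.choose s:ℕ)):ℝ)^(m-1) :=
      pow_le_pow_left₀ (by positivity) hbase _
    refine le_trans ?_ hpow
    rw [mul_pow]
    apply mul_le_mul_of_nonneg_right _ (by positivity : (0:ℝ) ≤ (T:ℝ)^(m-1))
    have hexpand : Real.exp (-(2*q))^(m-1) = Real.exp (-(2*q*((m-1:ℕ):ℝ))) := by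
      rw [← Real.exp_nat_mul]; congr 1; ring
    rw [hexpand]
    apply Real.exp_le_exp.2
    rw [neg_le_neg_iff]
    have hm1le : ((m-1:ℕ):ℝ) ≤ (2:ℝ)^s := by
      have h : (m-1:ℕ) ≤ 2^s := le_trans (Nat.sub_le m 1) hm2s
      calc ((m-1:ℕ):ℝ) ≤ ((2^s:ℕ):ℝ) := by exact_mod_cast h
        _ = (2:ℝ)^s := by push_cast; ring
    have hhalf2 : (1/2:ℝ)^s * (2:ℝ)^s = 1 := by
      rw [← mul_pow]; norm_num
    rw [hq_def]
    calc 2*(Real.exp 4*(1/2:ℝ)^s)*((m-1:ℕ):ℝ) ≤ 2*(Real.exp 4*(1/2:ℝ)^s)*(2:ℝ)^s := by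
          apply mul_le_mul_of_nonneg_left hm1le (by positivity)
      _ = 2*Real.exp 4 * ((1/2:ℝ)^s * (2:ℝ)^s) := by ring
      _ = 2*Real.exp 4 := by rw [hhalf2]; ring
  set Z : ℝ := (n:ℝ)^C2 with hZ_def
  set Qmin : ℝ := (s:ℝ) * ((2:ℝ)^s/Z) * (Real.exp (-(4:ℝ)) * (1/2:ℝ)^s * (T:ℝ))
      * (Real.exp (-(2*Real.exp 4)) * (T:ℝ)^(m-1)) with hQ_def
  have hQ0 : 0 ≤ Qmin := by rw [hQ_def]; positivity
  have hxbound : ∀ x : Fin n → Bool,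
      (if level x ∈ K then Qmin else 0)
        ≤ ∑ S ∈ clauseTuples n m s, ∑ i : Fin n,
            (if dnfF n m S x ≠ dnfF n m S (Function.update x i (!(x i))) then (1:ℝ) else 0) := by
    intro x
    by_cases hx : level x ∈ K
    · rw [if_pos hx]
      rw [hK_def, Finset.mem_Ico] at hx
      refine le_trans ?_ (key_count n m s x)
      have h1 := hAlow (level x) hx.1 hx.2
      have h2 := hTmA (level x) hx.1 hx.2
      rw [← hT_def, hQ_def]
      apply mul_le_mul _ h2 (by positivity) (by positivity)
      apply mul_le_mul _ h1 (by positivity) (by positivity)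
      apply mul_le_mul_of_nonneg_left hmge (by positivity)
    · rw [if_neg hx]
      apply Finset.sum_nonneg; intro S _
      apply Finset.sum_nonneg; intro i _
      split <;> norm_num
  have hcount : ∑ x : Fin n → Bool, (if level x ∈ K then Qmin else 0)
      = Qmin * (((Finset.univ.filter (fun x : Fin n → Bool => level x ∈ K)).card : ℝ)) := by
    rw [Finset.sum_ite, Finset.sum_const, Finset.sum_const_zero, add_zero,
      nsmul_eq_mul, mul_comm]
  have hcard_ge : (s:ℝ) * (Real.exp (-(12:ℝ)) * (n.choose b : ℝ))
      ≤ ((Finset.univ.filter (fun x : Fin n → Bool => level x ∈ K)).card : ℝ) := by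
    rw [card_level_mem n K]
    rw [Nat.cast_sum]
    calc (s:ℝ) * (Real.exp (-(12:ℝ)) * (n.choose b : ℝ))
        = ∑ _k ∈ K, Real.exp (-(12:ℝ)) * (n.choose b : ℝ) := by
          rw [Finset.sum_const, hK_def, Nat.card_Ico, nsmul_eq_mul]
          congr 2
          omega
      _ ≤ ∑ k ∈ K, ((n.choose k : ℕ):ℝ) := by
          apply Finset.sum_le_sum
          intro k hk
          rw [hK_def, Finset.mem_Ico] at hk
          exact hNKlow k hk.1 hk.2
  have hCb : (2:ℝ)^n ≤ 4 * Real.sqrt n * (n.choose b : ℝ) := by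
    rw [hb_def]; exact central_lower n (by omega)
  have hswap : ∑ S ∈ clauseTuples n m s, influence n (dnfF n m S)
      = (1/2^n : ℝ) * ∑ x : Fin n → Bool, ∑ S ∈ clauseTuples n m s, ∑ i : Fin n,
          (if dnfF n m S x ≠ dnfF n m S (Function.update x i (!(x i))) then (1:ℝ) else 0) := by
    simp only [influence]
    rw [← Finset.mul_sum]
    congr 1
    exact Finset.sum_comm
  have hcardCT : ((clauseTuples n m s).card : ℝ) = (T:ℝ)^m := by
    rw [card_clauseTuples, hT_def]; push_cast; ring
  have hPpos : (0:ℝ) < ((clauseTuples n m s).card : ℝ) := by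
    rw [hcardCT]; positivity
  rw [le_div_iff₀ hPpos, hcardCT]
  set W : ℝ := Real.sqrt n with hW_def
  set P : ℝ := (T:ℝ)^m with hP_def
  set E2 : ℝ := Real.exp (-(16 + 2*Real.exp 4)) with hE2_def
  have hWpos : 0 < W := by rw [hW_def]; positivity
  have hE2pos : 0 < E2 := by rw [hE2_def]; positivity
  have hPpos' : 0 < P := by rw [hP_def]; positivity
  have hQsimp : Qmin = (s:ℝ) * Real.exp (-(4:ℝ)) * Real.exp (-(2*Real.exp 4)) / Z * P := by
    have hTm : (T:ℝ)*(T:ℝ)^(m-1) = P := by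
      rw [hP_def, show m = (m-1)+1 by omega, pow_succ']
      norm_num
    have hhalf2 : (2:ℝ)^s * (1/2:ℝ)^s = 1 := by
      rw [← mul_pow]; norm_num
    rw [hQ_def]
    calc (s:ℝ) * ((2:ℝ)^s/Z) * (Real.exp (-(4:ℝ)) * (1/2:ℝ)^s * (T:ℝ))
        * (Real.exp (-(2*Real.exp 4)) * (T:ℝ)^(m-1))
        = ((s:ℝ) * Real.exp (-(4:ℝ)) * Real.exp (-(2*Real.exp 4)) / Z)
          * (((2:ℝ)^s * (1/2:ℝ)^s) * ((T:ℝ)*(T:ℝ)^(m-1))) := by ring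
      _ = (s:ℝ) * Real.exp (-(4:ℝ)) * Real.exp (-(2*Real.exp 4)) / Z * P := by
          rw [hhalf2, hTm]; ring
  have hE2eq : Real.exp (-(4:ℝ)) * Real.exp (-(2*Real.exp 4)) * Real.exp (-(12:ℝ)) = E2 := by
    rw [hE2_def, ← Real.exp_add, ← Real.exp_add]
    congr 1
    ring
  have hnum : E2/16 * W / Z * P
      ≤ (1/2^n : ℝ) * (Qmin * ((s:ℝ) * (Real.exp (-(12:ℝ)) * (n.choose b : ℝ)))) := by
    rw [hQsimp]
    have hstepA : (1/2^n : ℝ) * (((s:ℝ) * Real.exp (-(4:ℝ)) * Real.exp (-(2*Real.exp 4)) / Z * P)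
          * ((s:ℝ) * (Real.exp (-(12:ℝ)) * (n.choose b : ℝ))))
        = ((s:ℝ)*(s:ℝ)*E2/Z*P) * ((n.choose b : ℝ)/2^n) := by
      rw [← hE2eq]; ring
    rw [hstepA]
    have hCb3 : (1:ℝ)/(4*W) ≤ ((n.choose b : ℝ))/2^n := by
      rw [div_le_div_iff₀ (by positivity) (by positivity)]
      calc (1:ℝ) * 2^n = (2:ℝ)^n := by ring
        _ ≤ 4 * W * (n.choose b : ℝ) := by rw [hW_def] at *; exact hCb
        _ = (n.choose b : ℝ) * (4*W) := by ring
    have hfrac : W/16 ≤ (s:ℝ)*(s:ℝ)/(4*W) := by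
      rw [div_le_div_iff₀ (by norm_num) (by positivity)]
      have hWW : W * W = (n:ℝ) := by rw [hW_def]; exact Real.mul_self_sqrt (by positivity)
      calc W*(4*W) = 4*(W*W) := by ring
        _ = 4*(n:ℝ) := by rw [hWW]
        _ ≤ 16*((s:ℝ)*(s:ℝ)) := by linarith [hn4s2]
        _ = (s:ℝ)*(s:ℝ)*16 := by ring
    calc E2/16 * W / Z * P = (E2/Z*P) * (W/16) := by ring
      _ ≤ (E2/Z*P) * ((s:ℝ)*(s:ℝ)/(4*W)) := by
          apply mul_le_mul_of_nonneg_left hfrac (by positivity)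
      _ = ((s:ℝ)*(s:ℝ)*E2/Z*P) * ((1:ℝ)/(4*W)) := by ring
      _ ≤ ((s:ℝ)*(s:ℝ)*E2/Z*P) * (((n.choose b : ℝ))/2^n) := by
          apply mul_le_mul_of_nonneg_left hCb3 (by positivity)
  calc E2/16 * W / Z * P
      ≤ (1/2^n : ℝ) * (Qmin * ((s:ℝ) * (Real.exp (-(12:ℝ)) * (n.choose b : ℝ)))) := hnum
    _ ≤ (1/2^n : ℝ) * (Qmin
          * ((Finset.univ.filter (fun x : Fin n → Bool => level x ∈ K)).card : ℝ)) := by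
        apply mul_le_mul_of_nonneg_left _ (by positivity)
        exact mul_le_mul_of_nonneg_left hcard_ge hQ0
    _ = (1/2^n : ℝ) * ∑ x : Fin n → Bool, (if level x ∈ K then Qmin else 0) := by
        rw [hcount]
    _ ≤ (1/2^n : ℝ) * ∑ x : Fin n → Bool, ∑ S ∈ clauseTuples n m s, ∑ i : Fin n,
          (if dnfF n m S x ≠ dnfF n m S (Function.update x i (!(x i))) then (1:ℝ) else 0) := by
        apply mul_le_mul_of_nonneg_left _ (by positivity)
        exact Finset.sum_le_sum (fun x _ => hxbound x)
    _ = ∑ S ∈ clauseTuples n m s, influence n (dnfF n m S) := hswap.symm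
end
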